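/- Let G be an outerplanar graph of order n ≥ 9, and let u be a vertex of G with 1 ≤ d(u) ≤ n − 4. Then η(u) ≤ n, where η(u) = d(u) + (1/d(u))·Σ_{v ∈ N(u)} d(v). -/

import Mathlib

open scoped Classical

namespace OuterplanarQ

/-- Signless Laplacian matrix Q(G) = D(G) + A(G). -/
noncomputable def qMatrix {V : Type*} [Fintype V] (G : SimpleGraph V) : Matrix V V ℝ :=
  fun i j => (if i = j then (G.degree i : ℝ) else 0) + (if G.Adj i j then 1 else 0)

/-- The Q-index: the largest eigenvalue of Q(G). -/
noncomputable def qIndex {V : Type*} [Fintype V] (G : SimpleGraph V) : ℝ :=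
  sSup {μ : ℝ | ∃ x : V → ℝ, x ≠ 0 ∧ (qMatrix G).mulVec x = μ • x}

/-- Outerplanar: one-page book embedding characterization, i.e. the vertices admit a
linear ordering (injection into ℝ) such that no two edges interleave. -/
def IsOuterplanar {V : Type*} (G : SimpleGraph V) : Prop :=
  ∃ f : V → ℝ, Function.Injective f ∧
    ∀ a b c d : V, G.Adj a b → G.Adj c d →
      ¬ (f a < f c ∧ f c < f b ∧ f b < f d)

/-- `G` contains a copy of `F` as a subgraph. -/
def ContainsCopy {α β : Type*} (G : SimpleGraph α) (F : SimpleGraph β) : Prop :=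
  ∃ f : β → α, Function.Injective f ∧ ∀ a b : β, F.Adj a b → G.Adj (f a) (f b)

/-- Disjoint union of `t` copies of the path on `k` vertices. -/
def pathUnion (t k : ℕ) : SimpleGraph (Fin t × Fin k) where
  Adj a b := a.1 = b.1 ∧ (SimpleGraph.pathGraph k).Adj a.2 b.2
  symm := ⟨fun _ _ h => ⟨h.1.symm, h.2.symm⟩⟩
  loopless := ⟨fun a h => h.2.ne rfl⟩

/-- Disjoint union of two graphs. -/
def disjSum {α β : Type*} (G : SimpleGraph α) (H : SimpleGraph β) : SimpleGraph (α ⊕ β) where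
  Adj a b := match a, b with
    | Sum.inl x, Sum.inl y => G.Adj x y
    | Sum.inr x, Sum.inr y => H.Adj x y
    | _, _ => False
  symm := ⟨by rintro (x|x) (y|y) h <;> simp_all <;> exact h.symm⟩
  loopless := ⟨by rintro (x|x) h <;> simp_all⟩

/-- The join `K₁ ∨ H` of a single vertex with `H`. -/
def cone {V : Type*} (H : SimpleGraph V) : SimpleGraph (Option V) where
  Adj a b := match a, b with
    | none, none => False
    | none, some _ => True
    | some _, none => True
    | some x, some y => H.Adj x y
  symm := ⟨by rintro (_|x) (_|y) h <;> simp_all <;> exact h.symm⟩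
  loopless := ⟨by rintro (_|x) h <;> simp_all⟩

/-- A disjoint union of paths: acyclic with maximum degree at most 2. -/
def IsLinearForest {V : Type*} [Fintype V] (G : SimpleGraph V) : Prop :=
  G.IsAcyclic ∧ ∀ v : V, G.degree v ≤ 2

/-- The closed neighbourhood `N[u]`. -/
def closedNbhd {V : Type*} (G : SimpleGraph V) (u : V) : Set V :=
  insert u (G.neighborSet u)

/-- The graph obtained from `G` by adding the edge `uv`. -/
def addEdge {V : Type*} (G : SimpleGraph V) (u v : V) : SimpleGraph V :=
  G ⊔ SimpleGraph.fromEdgeSet {s(u, v)}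

/-- The graph obtained from `G` by deleting the edge `uv`. -/
def delEdge {V : Type*} (G : SimpleGraph V) (u v : V) : SimpleGraph V :=
  G.deleteEdges {s(u, v)}

/-- η(u) = d(u) + (1/d(u)) · Σ_{v ∈ N(u)} d(v). -/
noncomputable def eta {V : Type*} [Fintype V] (G : SimpleGraph V) (u : V) : ℝ :=
  (G.degree u : ℝ) + (1 / (G.degree u : ℝ)) * ∑ v ∈ G.neighborFinset u, (G.degree v : ℝ)

section Helpers

variable {V : Type*}

private lemma sorted3 {G : SimpleGraph V} {f : V → ℝ}
    (hf : Function.Injective f)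
    (hcross : ∀ a b c d : V, G.Adj a b → G.Adj c d →
      ¬ (f a < f c ∧ f c < f b ∧ f b < f d))
    {p q z1 z2 z3 : V} (hpq : p ≠ q)
    (h12 : f z1 < f z2) (h23 : f z2 < f z3)
    (hp1 : G.Adj p z1) (hp2 : G.Adj p z2) (hp3 : G.Adj p z3)
    (hq1 : G.Adj q z1) (hq2 : G.Adj q z2) (hq3 : G.Adj q z3) : False := by
  have hp2' : f p ≠ f z2 := fun h => hp2.ne (hf h)
  have hq2' : f q ≠ f z2 := fun h => hq2.ne (hf h)
  have hpq' : f p ≠ f q := fun h => hpq (hf h)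
  rcases lt_or_gt_of_ne hp2' with hp | hp
  · rcases lt_or_gt_of_ne hq2' with hq | hq
    · rcases lt_or_gt_of_ne hpq' with h | h
      · exact hcross p z2 q z3 hp2 hq3 ⟨h, hq, h23⟩
      · exact hcross q z2 p z3 hq2 hp3 ⟨h, hp, h23⟩
    · have hp1' : f p ≠ f z1 := fun h => hp1.ne (hf h)
      rcases lt_or_gt_of_ne hp1' with h1 | h1
      · exact hcross p z2 z1 q hp2 hq1.symm ⟨h1, h12, hq⟩
      · have hq3' : f q ≠ f z3 := fun h => hq3.ne (hf h)
        rcases lt_or_gt_of_ne hq3' with h3 | h3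
        · exact hcross z1 q p z3 hq1.symm hp3 ⟨h1, lt_trans hp hq, h3⟩
        · exact hcross p z3 z2 q hp3 hq2.symm ⟨hp, h23, h3⟩
  · rcases lt_or_gt_of_ne hq2' with hq | hq
    · have hq1' : f q ≠ f z1 := fun h => hq1.ne (hf h)
      rcases lt_or_gt_of_ne hq1' with h1 | h1
      · exact hcross q z2 z1 p hq2 hp1.symm ⟨h1, h12, hp⟩
      · have hp3' : f p ≠ f z3 := fun h => hp3.ne (hf h)
        rcases lt_or_gt_of_ne hp3' with h3 | h3
        · exact hcross z1 p q z3 hp1.symm hq3 ⟨h1, lt_trans hq hp, h3⟩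
        · exact hcross q z3 z2 p hq3 hp2.symm ⟨hq, h23, h3⟩
    · rcases lt_or_gt_of_ne hpq' with h | h
      · exact hcross z1 p z2 q hp1.symm hq2.symm ⟨h12, hp, h⟩
      · exact hcross z1 q z2 p hq1.symm hp2.symm ⟨h12, hq, h⟩

private lemma no_three_common {G : SimpleGraph V} {f : V → ℝ}
    (hf : Function.Injective f)
    (hcross : ∀ a b c d : V, G.Adj a b → G.Adj c d →
      ¬ (f a < f c ∧ f c < f b ∧ f b < f d))
    {p q z1 z2 z3 : V} (hpq : p ≠ q)
    (h12 : z1 ≠ z2) (h13 : z1 ≠ z3) (h23 : z2 ≠ z3)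
    (hp1 : G.Adj p z1) (hp2 : G.Adj p z2) (hp3 : G.Adj p z3)
    (hq1 : G.Adj q z1) (hq2 : G.Adj q z2) (hq3 : G.Adj q z3) : False := by
  have e12 := hf.ne h12
  have e13 := hf.ne h13
  have e23 := hf.ne h23
  rcases lt_or_gt_of_ne e12 with a | a <;> rcases lt_or_gt_of_ne e23 with b | b
  · exact sorted3 hf hcross hpq a b hp1 hp2 hp3 hq1 hq2 hq3
  · rcases lt_or_gt_of_ne e13 with c | c
    · exact sorted3 hf hcross hpq c b hp1 hp3 hp2 hq1 hq3 hq2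
    · exact sorted3 hf hcross hpq c a hp3 hp1 hp2 hq3 hq1 hq2
  · rcases lt_or_gt_of_ne e13 with c | c
    · exact sorted3 hf hcross hpq a c hp2 hp1 hp3 hq2 hq1 hq3
    · exact sorted3 hf hcross hpq b c hp2 hp3 hp1 hq2 hq3 hq1
  · exact sorted3 hf hcross hpq b a hp3 hp2 hp1 hq3 hq2 hq1

private lemma common_le_two [Fintype V] {G : SimpleGraph V} {f : V → ℝ}
    (hf : Function.Injective f)
    (hcross : ∀ a b c d : V, G.Adj a b → G.Adj c d →
      ¬ (f a < f c ∧ f c < f b ∧ f b < f d))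
    {p q : V} (hpq : p ≠ q) :
    (G.neighborFinset p ∩ G.neighborFinset q).card ≤ 2 := by
  by_contra h
  push_neg at h
  obtain ⟨a, b, c, ha, hb, hc, hab, hac, hbc⟩ := Finset.two_lt_card_iff.mp h
  simp only [Finset.mem_inter, SimpleGraph.mem_neighborFinset] at ha hb hc
  exact no_three_common hf hcross hpq hab hac hbc ha.1 hb.1 hc.1 ha.2 hb.2 hc.2


private lemma pairs_card_le [Fintype V] {G : SimpleGraph V} {f : V → ℝ}
    (hf : Function.Injective f)
    (hcross : ∀ a b c d : V, G.Adj a b → G.Adj c d →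
      ¬ (f a < f c ∧ f c < f b ∧ f b < f d))
    (u : V) (hne : (G.neighborFinset u).Nonempty) :
    (((G.neighborFinset u) ×ˢ (G.neighborFinset u)).filter fun z => G.Adj z.1 z.2).card
      ≤ 2 * ((G.neighborFinset u).card - 1) := by
  classical
  set A := G.neighborFinset u with hA
  have hmemA : ∀ {v : V}, v ∈ A → G.Adj u v := fun {v} h => by
    rwa [hA, SimpleGraph.mem_neighborFinset] at h
  have hfu : ∀ {v : V}, v ∈ A → f u ≠ f v := fun {v} h he => (hmemA h).ne (hf he)
  obtain ⟨m, hmA, hmmin⟩ := A.exists_min_image f hne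
  set Sab := A.filter (fun a => f u < f a) with hSab
  obtain ⟨s, hs⟩ : ∃ s : V, Sab.Nonempty → s ∈ A ∧ f u < f s ∧ ∀ b ∈ Sab, f s ≤ f b := by
    by_cases h : Sab.Nonempty
    · obtain ⟨s, h1, h2⟩ := Sab.exists_min_image f h
      rw [hSab, Finset.mem_filter] at h1
      exact ⟨s, fun _ => ⟨h1.1, h1.2, h2⟩⟩
    · exact ⟨u, fun h' => absurd h' h⟩
  set Fv : V × V → V := fun z =>
    if (f z.1 < f u ∧ f u < f z.2) ∨ (f z.2 < f u ∧ f u < f z.1) then s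
    else if f z.1 < f z.2 then z.2 else z.1 with hFv
  have hFval : ∀ v x : V, x ∈ A → f v < f x → ¬ (f v < f u ∧ f u < f x) → Fv (v, x) = x := by
    intro v x hxA hvx hnsp
    rw [hFv]
    simp only
    rw [if_neg, if_pos hvx]
    rintro (h | h)
    · exact hnsp h
    · exact absurd (lt_trans h.1 h.2) (not_lt.mpr hvx.le)
  have hFsp : ∀ v x : V, f v < f u → f u < f x → Fv (v, x) = s := by
    intro v x h1 h2
    rw [hFv]
    simp only
    rw [if_pos (Or.inl ⟨h1, h2⟩)]
  have hcard : ((A.erase m) ×ˢ (Finset.univ : Finset Bool)).card = 2 * (A.card - 1) := by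
    rw [Finset.card_product, Finset.card_erase_of_mem hmA, Finset.card_univ, Fintype.card_bool,
      mul_comm]
  rw [← hcard]
  apply Finset.card_le_card_of_injOn (fun z => (Fv z, decide (f z.1 < f z.2)))
  · -- maps to
    intro z hz
    rw [Finset.mem_coe, Finset.mem_filter, Finset.mem_product] at hz
    obtain ⟨⟨hz1, hz2⟩, hadj⟩ := hz
    suffices hgoal : Fv z ≠ m ∧ Fv z ∈ A by
      exact Finset.mem_product.mpr ⟨Finset.mem_erase.mpr hgoal, Finset.mem_univ _⟩
    by_cases hsp : (f z.1 < f u ∧ f u < f z.2) ∨ (f z.2 < f u ∧ f u < f z.1)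
    · have hFz : Fv z = s := by rw [hFv]; simp only [if_pos hsp]
      have hSne : Sab.Nonempty := by
        rcases hsp with ⟨h1, h2⟩ | ⟨h1, h2⟩
        · exact ⟨z.2, by rw [hSab, Finset.mem_filter]; exact ⟨hz2, h2⟩⟩
        · exact ⟨z.1, by rw [hSab, Finset.mem_filter]; exact ⟨hz1, h2⟩⟩
      obtain ⟨hsA, hus, _⟩ := hs hSne
      have hms : f m < f s := by
        rcases hsp with ⟨h1, _⟩ | ⟨h1, _⟩
        · exact lt_trans (lt_of_le_of_lt (hmmin z.1 hz1) h1) hus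
        · exact lt_trans (lt_of_le_of_lt (hmmin z.2 hz2) h1) hus
      rw [hFz]
      exact ⟨fun he => hms.ne' (congrArg f he), hsA⟩
    · have hzne : f z.1 ≠ f z.2 := fun he => hadj.ne (hf he)
      have hFz : Fv z = if f z.1 < f z.2 then z.2 else z.1 := by
        rw [hFv]; simp only [if_neg hsp]
      rcases lt_or_gt_of_ne hzne with h | h
      · rw [hFz, if_pos h]
        exact ⟨fun he => (lt_of_le_of_lt (hmmin z.1 hz1) h).ne' (congrArg f he), hz2⟩
      · rw [hFz, if_neg (not_lt.mpr h.le)]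
        exact ⟨fun he => (lt_of_le_of_lt (hmmin z.2 hz2) h).ne' (congrArg f he), hz1⟩
  · -- injective
    have key : ∀ v x v' x' : V, v ∈ A → x ∈ A → v' ∈ A → x' ∈ A →
        G.Adj v x → G.Adj v' x' → f v < f x → f v' < f x' →
        Fv (v, x) = Fv (v', x') → v = v' ∧ x = x' := by
      intro v x v' x' hvA hxA hv'A hx'A hadj hadj' hvx hvx' heq
      by_cases hsp : f v < f u ∧ f u < f x <;> by_cases hsp' : f v' < f u ∧ f u < f x'
      · constructor
        · rcases lt_trichotomy (f v) (f v') with h | h | h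
          · exact absurd ⟨h, hsp'.1, hsp'.2⟩ (hcross v u v' x' (hmemA hvA).symm hadj')
          · exact hf h
          · exact absurd ⟨h, hsp.1, hsp.2⟩ (hcross v' u v x (hmemA hv'A).symm hadj)
        · rcases lt_trichotomy (f x) (f x') with h | h | h
          · exact absurd ⟨hsp.1, hsp.2, h⟩ (hcross v x u x' hadj (hmemA hx'A))
          · exact hf h
          · exact absurd ⟨hsp'.1, hsp'.2, h⟩ (hcross v' x' u x hadj' (hmemA hxA))
      · exfalso
        rw [hFsp v x hsp.1 hsp.2, hFval v' x' hx'A hvx' hsp'] at heq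
        obtain ⟨hsA, hus, hsmin⟩ := hs ⟨x, by rw [hSab, Finset.mem_filter]; exact ⟨hxA, hsp.2⟩⟩
        rcases lt_or_gt_of_ne (hfu hv'A) with h | h
        · have : f s ≤ f v' := hsmin v' (by rw [hSab, Finset.mem_filter]; exact ⟨hv'A, h⟩)
          rw [heq] at this
          exact absurd hvx' (not_lt.mpr this)
        · rcases lt_or_gt_of_ne (hfu hx'A) with h2 | h2
          · exact hsp' ⟨h, h2⟩
          · rw [heq] at hus
            exact absurd (lt_trans hus h2) (lt_irrefl _)
      · exfalso
        rw [hFsp v' x' hsp'.1 hsp'.2, hFval v x hxA hvx hsp] at heq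
        obtain ⟨hsA, hus, hsmin⟩ := hs ⟨x', by rw [hSab, Finset.mem_filter]; exact ⟨hx'A, hsp'.2⟩⟩
        rcases lt_or_gt_of_ne (hfu hvA) with h | h
        · have : f s ≤ f v := hsmin v (by rw [hSab, Finset.mem_filter]; exact ⟨hvA, h⟩)
          rw [← heq] at this
          exact absurd hvx (not_lt.mpr this)
        · rcases lt_or_gt_of_ne (hfu hxA) with h2 | h2
          · exact hsp ⟨h, h2⟩
          · rw [← heq] at hus
            exact absurd (lt_trans hus h2) (lt_irrefl _)
      · rw [hFval v x hxA hvx hsp, hFval v' x' hx'A hvx' hsp'] at heq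
        subst heq
        refine ⟨?_, rfl⟩
        rcases lt_trichotomy (f v) (f v') with h | h | h
        · exfalso
          have hv'x : f v' < f x := hvx'
          rcases lt_or_gt_of_ne (hfu hvA) with h2 | h2
          · exact hcross u v' v x (hmemA hv'A) hadj ⟨h2, h, hv'x⟩
          · rcases lt_or_gt_of_ne (hfu hxA) with h3 | h3
            · exact hsp ⟨h2, h3⟩
            · exact hcross v x v' u hadj (hmemA hv'A).symm ⟨h, hv'x, h3⟩
        · exact hf h
        · exfalso
          have hvx2 : f v < f x := hvx
          rcases lt_or_gt_of_ne (hfu hv'A) with h2 | h2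
          · exact hcross u v v' x (hmemA hvA) hadj' ⟨h2, h, hvx2⟩
          · rcases lt_or_gt_of_ne (hfu hxA) with h3 | h3
            · exact hsp' ⟨h2, h3⟩
            · exact hcross v' x v u hadj' (hmemA hvA).symm ⟨h, hvx2, h3⟩
    have hFswap : ∀ a b : V, f b < f a → Fv (a, b) = Fv (b, a) := by
      intro a b hab
      by_cases hc : (f a < f u ∧ f u < f b) ∨ (f b < f u ∧ f u < f a)
      · rw [hFv]
        simp only
        rw [if_pos hc, if_pos hc.symm]
      · rw [hFv]
        simp only
        rw [if_neg hc, if_neg (fun h => hc (Or.symm h)), if_neg (not_lt.mpr hab.le), if_pos hab]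
    intro z hz z' hz' heq
    rw [Finset.coe_filter, Set.mem_setOf_eq, Finset.mem_product] at hz hz'
    obtain ⟨⟨hz1, hz2⟩, hadj⟩ := hz
    obtain ⟨⟨hz1', hz2'⟩, hadj'⟩ := hz'
    have h1 := congrArg Prod.fst heq
    have h2 := congrArg Prod.snd heq
    simp only at h1 h2
    rw [decide_eq_decide] at h2
    have hzne : f z.1 ≠ f z.2 := fun he => hadj.ne (hf he)
    have hzne' : f z'.1 ≠ f z'.2 := fun he => hadj'.ne (hf he)
    rcases lt_or_gt_of_ne hzne with h | h
    · have h' : f z'.1 < f z'.2 := h2.mp h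
      obtain ⟨e1, e2⟩ := key z.1 z.2 z'.1 z'.2 hz1 hz2 hz1' hz2' hadj hadj' h h' h1
      exact Prod.ext e1 e2
    · have h' : f z'.2 < f z'.1 := by
        rcases lt_or_gt_of_ne hzne' with hh | hh
        · exact absurd (h2.mpr hh) (not_lt.mpr h.le)
        · exact hh
      rw [hFswap z.1 z.2 h, hFswap z'.1 z'.2 h'] at h1
      obtain ⟨e2, e1⟩ := key z.2 z.1 z'.2 z'.1 hz2 hz1 hz2' hz1' hadj.symm hadj'.symm h h' h1
      exact Prod.ext e1 e2

end Helpers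

/-- In an outerplanar graph of order `n ≥ 9`, every vertex `u` with `1 ≤ d(u) ≤ n - 4`
satisfies `η(u) ≤ n`. -/
theorem eta_le_of_outerplanar
    {V : Type*} [Fintype V] {n : ℕ} (hn : 9 ≤ n)
    (G : SimpleGraph V) (hcard : Fintype.card V = n) (hout : IsOuterplanar G)
    (u : V) (h₁ : 1 ≤ G.degree u) (h₂ : G.degree u ≤ n - 4) :
    eta G u ≤ (n : ℝ) := by
  classical
  obtain ⟨f, hf, hcross⟩ := hout
  have hdn : G.degree u + 4 ≤ n := by omega
  have hAcard : (G.neighborFinset u).card = G.degree u :=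
    G.card_neighborFinset_eq_degree u
  have hmaster : (∑ v ∈ G.neighborFinset u, G.degree v) + G.degree u * G.degree u
      ≤ G.degree u * n := by
    rcases (by omega : G.degree u = 1 ∨ G.degree u = 2 ∨ 3 ≤ G.degree u) with h1 | h2 | h3
    · obtain ⟨v, hv⟩ := Finset.card_eq_one.mp (hAcard.trans h1)
      rw [hv, Finset.sum_singleton, h1]
      have hlt := G.degree_lt_card_verts v
      omega
    · obtain ⟨v, w, hvw, hvwA⟩ := Finset.card_eq_two.mp (hAcard.trans h2)
      rw [hvwA, Finset.sum_pair hvw, h2]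
      have hc2 := common_le_two hf hcross hvw
      have hcu : (G.neighborFinset v ∪ G.neighborFinset w).card ≤ n := by
        rw [← hcard]; exact Finset.card_le_univ _
      have hui := Finset.card_union_add_card_inter (G.neighborFinset v) (G.neighborFinset w)
      have hdv : (G.neighborFinset v).card = G.degree v := G.card_neighborFinset_eq_degree v
      have hdw : (G.neighborFinset w).card = G.degree w := G.card_neighborFinset_eq_degree w
      omega
    · have hne : (G.neighborFinset u).Nonempty := Finset.card_pos.mp (by omega)
      have huA : u ∉ G.neighborFinset u := by
        rw [SimpleGraph.mem_neighborFinset]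
        exact G.irrefl
      have hBcard : (insert u (G.neighborFinset u)).card = G.degree u + 1 := by
        rw [Finset.card_insert_of_notMem huA, hAcard]
      have hWsum : (insert u (G.neighborFinset u)).card
          + (insert u (G.neighborFinset u))ᶜ.card = n := by
        rw [Finset.card_add_card_compl, hcard]
      set W := (insert u (G.neighborFinset u))ᶜ with hW
      have hsplit : ∀ v ∈ G.neighborFinset u, G.degree v =
          ((G.neighborFinset u ∩ G.neighborFinset v).card + 1)
            + (W ∩ G.neighborFinset v).card := by
        intro v hv
        have hadj : G.Adj u v := (G.mem_neighborFinset u v).mp hv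
        have hdv : (G.neighborFinset v).card = G.degree v := G.card_neighborFinset_eq_degree v
        have e1 : (G.neighborFinset v ∩ insert u (G.neighborFinset u)).card
            + (G.neighborFinset v \ insert u (G.neighborFinset u)).card = G.degree v := by
          rw [Finset.card_inter_add_card_sdiff, hdv]
        have e2 : G.neighborFinset v ∩ insert u (G.neighborFinset u)
            = insert u (G.neighborFinset u ∩ G.neighborFinset v) := by
          rw [Finset.inter_comm, Finset.insert_inter_of_mem]
          rw [SimpleGraph.mem_neighborFinset]
          exact hadj.symm
        have e3 : G.neighborFinset v \ insert u (G.neighborFinset u)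
            = W ∩ G.neighborFinset v := by
          ext a
          simp only [Finset.mem_sdiff, hW, Finset.mem_inter, Finset.mem_compl]
          tauto
        have e4 : u ∉ G.neighborFinset u ∩ G.neighborFinset v :=
          fun h => huA (Finset.mem_inter.mp h).1
        rw [e2, e3, Finset.card_insert_of_notMem e4] at e1
        omega
      have hsum : (∑ v ∈ G.neighborFinset u, G.degree v)
          = (∑ v ∈ G.neighborFinset u, (G.neighborFinset u ∩ G.neighborFinset v).card)
            + (G.neighborFinset u).card
            + (∑ v ∈ G.neighborFinset u, (W ∩ G.neighborFinset v).card) := by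
        rw [Finset.sum_congr rfl hsplit, Finset.sum_add_distrib, Finset.sum_add_distrib,
          Finset.sum_const, smul_eq_mul, mul_one]
      have hT1 : (∑ v ∈ G.neighborFinset u, (G.neighborFinset u ∩ G.neighborFinset v).card)
          ≤ 2 * (G.degree u - 1) := by
        have e : (∑ v ∈ G.neighborFinset u, (G.neighborFinset u ∩ G.neighborFinset v).card)
            = (((G.neighborFinset u) ×ˢ (G.neighborFinset u)).filter
                fun z => G.Adj z.1 z.2).card := by
          rw [Finset.card_filter, Finset.sum_product]
          refine Finset.sum_congr rfl fun v hv => ?_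
          rw [← Finset.filter_mem_eq_inter, Finset.card_filter]
          exact Finset.sum_congr rfl fun x hx =>
            if_congr (G.mem_neighborFinset v x) rfl rfl
        rw [e, ← hAcard]
        exact pairs_card_le hf hcross u hne
      have hT3 : (∑ v ∈ G.neighborFinset u, (W ∩ G.neighborFinset v).card)
          ≤ 2 * W.card := by
        have e1 : ∀ v : V, (W ∩ G.neighborFinset v).card
            = ∑ w ∈ W, if G.Adj v w then 1 else 0 := by
          intro v
          rw [← Finset.filter_mem_eq_inter, Finset.card_filter]
          exact Finset.sum_congr rfl fun x hx =>
            if_congr (G.mem_neighborFinset v x) rfl rfl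
        have e2 : ∀ w : V, (G.neighborFinset u ∩ G.neighborFinset w).card
            = ∑ v ∈ G.neighborFinset u, if G.Adj v w then 1 else 0 := by
          intro w
          rw [← Finset.filter_mem_eq_inter, Finset.card_filter]
          exact Finset.sum_congr rfl fun x hx =>
            if_congr ((G.mem_neighborFinset w x).trans (G.adj_comm w x)) rfl rfl
        calc (∑ v ∈ G.neighborFinset u, (W ∩ G.neighborFinset v).card)
            = ∑ v ∈ G.neighborFinset u, ∑ w ∈ W, if G.Adj v w then 1 else 0 :=
              Finset.sum_congr rfl fun v _ => e1 v
          _ = ∑ w ∈ W, ∑ v ∈ G.neighborFinset u, if G.Adj v w then 1 else 0 :=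
              Finset.sum_comm
          _ = ∑ w ∈ W, (G.neighborFinset u ∩ G.neighborFinset w).card :=
              Finset.sum_congr rfl fun w _ => (e2 w).symm
          _ ≤ ∑ _w ∈ W, 2 := by
              refine Finset.sum_le_sum fun w hw => ?_
              have hwu : u ≠ w := by
                intro h
                rw [hW, Finset.mem_compl] at hw
                exact hw (h ▸ Finset.mem_insert_self u _)
              exact common_le_two hf hcross hwu
          _ = 2 * W.card := by rw [Finset.sum_const, smul_eq_mul, mul_comm]
      have hS2 : (∑ v ∈ G.neighborFinset u, G.degree v) + 2
          ≤ 3 * G.degree u + 2 * W.card := by omega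
      have hn' : G.degree u + 1 + W.card = n := by omega
      rcases eq_or_lt_of_le h3 with hd3 | hd4
      · rw [← hd3] at hS2 hn' ⊢
        omega
      · have h4 : 4 ≤ G.degree u := hd4
        obtain ⟨e, he⟩ : ∃ e, G.degree u = e + 4 := ⟨G.degree u - 4, by omega⟩
        obtain ⟨k, hk⟩ : ∃ k, W.card = k + 3 := ⟨W.card - 3, by omega⟩
        have hnn : n = e + k + 8 := by omega
        rw [he] at hS2 ⊢
        rw [hk] at hS2
        rw [hnn]
        nlinarith [hS2]
  have hd0 : (0:ℝ) < (G.degree u : ℝ) := by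
    have h0 : 0 < G.degree u := h₁
    exact_mod_cast h0
  have hcastS : ((∑ v ∈ G.neighborFinset u, G.degree v : ℕ) : ℝ)
      + (G.degree u : ℝ) * (G.degree u : ℝ) ≤ (G.degree u : ℝ) * (n : ℝ) := by
    exact_mod_cast hmaster
  unfold eta
  have hsc : (∑ v ∈ G.neighborFinset u, ((G.degree v : ℝ)))
      = ((∑ v ∈ G.neighborFinset u, G.degree v : ℕ) : ℝ) := by
    rw [Nat.cast_sum]
  rw [hsc]
  have hfin : (1 / (G.degree u : ℝ)) * ((∑ v ∈ G.neighborFinset u, G.degree v : ℕ) : ℝ)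
      ≤ (n : ℝ) - (G.degree u : ℝ) := by
    rw [one_div, inv_mul_le_iff₀ hd0]
    nlinarith [hcastS]
  linarith
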